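/- Let α > 1 be a real number and let T : (0,1] → (0,1] be the map defined by T(x) = (α^d x − 1)/(α − 1) for x ∈ (α^{-d}, α^{-(d-1)}] (d a positive integer). Then for every sequence (d_i)_{i≥1} of positive integers, T(⟨d_1, d_2, d_3, …⟩_α) = ⟨d_2, d_3, d_4, …⟩_α; equivalently, T ∘ π = π ∘ σ where σ is the left shift on sequences. Consequently, for x = ⟨d_i⟩_α and a positive integer d, one has d_j = d if and only if T^{j-1}(x) ∈ (α^{-d}, α^{-(d-1)}]. -/

import Mathlib

/-- The α-expansion value ⟨d_i⟩_α = ∑_{i=1}^∞ (α-1)^{i-1} α^{-(d_1+⋯+d_i)},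
with the digit sequence `d : ℕ → ℕ` indexed from 0 (so `d 0` is the first digit). -/
noncomputable def alphaExpansion (α : ℝ) (d : ℕ → ℕ) : ℝ :=
  ∑' i : ℕ, (α - 1) ^ i * α ^ (-((∑ j ∈ Finset.range (i + 1), d j : ℕ) : ℤ))

section Aux

variable {α : ℝ}

private lemma aE_term_nonneg (hα : 1 < α) (d : ℕ → ℕ) (i : ℕ) :
    0 ≤ (α - 1) ^ i * α ^ (-((∑ j ∈ Finset.range (i + 1), d j : ℕ) : ℤ)) := by
  have h1 : (0:ℝ) ≤ α - 1 := by linarith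
  have h2 : (0:ℝ) < α := by linarith
  positivity

private lemma aE_sum_lb (d : ℕ → ℕ) (hd : ∀ i, 1 ≤ d i) (i : ℕ) :
    i + 1 ≤ ∑ j ∈ Finset.range (i + 1), d j := by
  calc i + 1 = ∑ _j ∈ Finset.range (i + 1), 1 := by simp
  _ ≤ _ := Finset.sum_le_sum fun j _ => hd j

private lemma aE_term_le (hα : 1 < α) (d : ℕ → ℕ) (hd : ∀ i, 1 ≤ d i) (i : ℕ) :
    (α - 1) ^ i * α ^ (-((∑ j ∈ Finset.range (i + 1), d j : ℕ) : ℤ))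
      ≤ (1 / α) * ((α - 1) / α) ^ i := by
  have h0 : (0:ℝ) < α := by linarith
  have h1 : (0:ℝ) ≤ α - 1 := by linarith
  have hle : α ^ (-((∑ j ∈ Finset.range (i + 1), d j : ℕ) : ℤ))
      ≤ α ^ (-(((i + 1 : ℕ)) : ℤ)) := by
    apply zpow_le_zpow_right₀ hα.le
    have := aE_sum_lb d hd i
    omega
  have heq : (1 / α) * ((α - 1) / α) ^ i = (α - 1) ^ i * α ^ (-(((i + 1 : ℕ)) : ℤ)) := by
    rw [div_pow, zpow_neg, zpow_natCast, pow_succ]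
    field_simp
  rw [heq]
  exact mul_le_mul_of_nonneg_left hle (by positivity)

private lemma aE_summable (hα : 1 < α) (d : ℕ → ℕ) (hd : ∀ i, 1 ≤ d i) :
    Summable fun i : ℕ =>
      (α - 1) ^ i * α ^ (-((∑ j ∈ Finset.range (i + 1), d j : ℕ) : ℤ)) := by
  have h0 : (0:ℝ) < α := by linarith
  have hr0 : (0:ℝ) ≤ (α - 1) / α := div_nonneg (by linarith) h0.le
  have hr1 : (α - 1) / α < 1 := by rw [div_lt_one h0]; linarith
  exact Summable.of_nonneg_of_le (aE_term_nonneg hα d) (aE_term_le hα d hd)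
    ((summable_geometric_of_lt_one hr0 hr1).mul_left _)

private lemma aE_le_one (hα : 1 < α) (d : ℕ → ℕ) (hd : ∀ i, 1 ≤ d i) :
    alphaExpansion α d ≤ 1 := by
  have h0 : (0:ℝ) < α := by linarith
  have hr0 : (0:ℝ) ≤ (α - 1) / α := div_nonneg (by linarith) h0.le
  have hr1 : (α - 1) / α < 1 := by rw [div_lt_one h0]; linarith
  have hg : Summable fun i : ℕ => (1 / α) * ((α - 1) / α) ^ i :=
    (summable_geometric_of_lt_one hr0 hr1).mul_left _
  have h := Summable.tsum_le_tsum (aE_term_le hα d hd) (aE_summable hα d hd) hg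
  refine h.trans ?_
  rw [tsum_mul_left, tsum_geometric_of_lt_one hr0 hr1]
  rw [show (1:ℝ) - (α - 1)/α = 1/α by field_simp; ring]
  field_simp
  exact le_rfl

private lemma aE_pos (hα : 1 < α) (d : ℕ → ℕ) (hd : ∀ i, 1 ≤ d i) :
    0 < alphaExpansion α d := by
  have h0 : (0:ℝ) < α := by linarith
  have := Summable.le_tsum (aE_summable hα d hd) 0 (fun i _ => aE_term_nonneg hα d i)
  have hterm : (0:ℝ) < (α - 1) ^ 0 * α ^ (-((∑ j ∈ Finset.range (0 + 1), d j : ℕ) : ℤ)) := by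
    simp only [pow_zero, one_mul]
    positivity
  exact hterm.trans_le this

private lemma aE_decomp (hα : 1 < α) (d : ℕ → ℕ) (hd : ∀ i, 1 ≤ d i) :
    alphaExpansion α d = α ^ (-(d 0 : ℤ)) +
      ((α - 1) * α ^ (-(d 0 : ℤ))) * alphaExpansion α (fun i => d (i + 1)) := by
  have h0 : (0:ℝ) < α := by linarith
  rw [alphaExpansion, Summable.tsum_eq_zero_add (aE_summable hα d hd)]
  congr 1
  · simp
  · rw [alphaExpansion, ← tsum_mul_left]
    apply tsum_congr
    intro n
    have hsum : ∑ j ∈ Finset.range (n + 1 + 1), d j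
        = (∑ j ∈ Finset.range (n + 1), d (j + 1)) + d 0 := Finset.sum_range_succ' d (n + 1)
    rw [hsum]
    have : (-(((∑ j ∈ Finset.range (n + 1), d (j + 1)) + d 0 : ℕ) : ℤ))
        = (-(d 0 : ℤ)) + (-((∑ j ∈ Finset.range (n + 1), d (j + 1) : ℕ) : ℤ)) := by
      push_cast; ring
    rw [this, zpow_add₀ h0.ne', pow_succ]
    ring

private lemma aE_mem (hα : 1 < α) (d : ℕ → ℕ) (hd : ∀ i, 1 ≤ d i) :
    alphaExpansion α d ∈ Set.Ioc (α ^ (-(d 0 : ℤ))) (α ^ (-(d 0 : ℤ) + 1)) := by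
  have h0 : (0:ℝ) < α := by linarith
  have hd' : ∀ i, 1 ≤ (fun i => d (i + 1)) i := fun i => hd (i + 1)
  have hx' := aE_pos hα (fun i => d (i + 1)) hd'
  have hx1 := aE_le_one hα (fun i => d (i + 1)) hd'
  have hdec := aE_decomp hα d hd
  constructor
  · rw [hdec]
    have : 0 < ((α - 1) * α ^ (-(d 0 : ℤ))) * alphaExpansion α (fun i => d (i + 1)) := by
      have h1 : (0:ℝ) < α - 1 := by linarith
      positivity
    linarith
  · rw [hdec, zpow_add₀ h0.ne', zpow_one]
    have hz : (0:ℝ) < α ^ (-(d 0 : ℤ)) := by positivity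
    nlinarith [mul_le_mul_of_nonneg_left hx1 (le_of_lt (mul_pos (by linarith : (0:ℝ) < α - 1) hz))]

private lemma aE_step (hα : 1 < α) (T : ℝ → ℝ)
    (hT : ∀ e : ℕ, 1 ≤ e →
      ∀ x ∈ Set.Ioc (α ^ (-(e : ℤ))) (α ^ (-(e : ℤ) + 1)),
        T x = (α ^ (e : ℤ) * x - 1) / (α - 1))
    (d : ℕ → ℕ) (hd : ∀ i, 1 ≤ d i) :
    T (alphaExpansion α d) = alphaExpansion α (fun i => d (i + 1)) := by
  have h0 : (0:ℝ) < α := by linarith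
  have h1 : (α:ℝ) - 1 ≠ 0 := by linarith
  rw [hT (d 0) (hd 0) _ (aE_mem hα d hd)]
  set y := alphaExpansion α (fun i => d (i + 1)) with hy
  have hinv : α ^ ((d 0 : ℤ)) * α ^ (-(d 0 : ℤ)) = 1 := by
    rw [← zpow_add₀ h0.ne']; simp
  rw [aE_decomp hα d hd, ← hy]
  have : α ^ ((d 0 : ℤ)) * (α ^ (-(d 0 : ℤ)) + ((α - 1) * α ^ (-(d 0 : ℤ))) * y) - 1
      = (α - 1) * y := by
    have : α ^ ((d 0 : ℤ)) * (α ^ (-(d 0 : ℤ)) + ((α - 1) * α ^ (-(d 0 : ℤ))) * y)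
        = (α ^ ((d 0 : ℤ)) * α ^ (-(d 0 : ℤ))) * 1
          + (α - 1) * ((α ^ ((d 0 : ℤ)) * α ^ (-(d 0 : ℤ))) * y) := by ring
    rw [this, hinv]; ring
  rw [this]
  field_simp

private lemma aE_iter (hα : 1 < α) (T : ℝ → ℝ)
    (hT : ∀ e : ℕ, 1 ≤ e →
      ∀ x ∈ Set.Ioc (α ^ (-(e : ℤ))) (α ^ (-(e : ℤ) + 1)),
        T x = (α ^ (e : ℤ) * x - 1) / (α - 1)) :
    ∀ (j : ℕ) (d : ℕ → ℕ), (∀ i, 1 ≤ d i) →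
      T^[j] (alphaExpansion α d) = alphaExpansion α (fun i => d (i + j)) := by
  intro j
  induction j with
  | zero => intro d hd; simp
  | succ n ih =>
    intro d hd
    rw [Function.iterate_succ_apply, aE_step hα T hT d hd,
      ih (fun i => d (i + 1)) (fun i => hd (i + 1))]
    have h2 : (fun i => d (i + 1 + n)) = fun i => d (i + (n + 1)) := by
      funext i; congr 1; omega
    rw [show (fun i => d (i + n + 1)) = fun i => d (i + 1 + n) from
      funext fun i => by congr 1; omega, h2]

end Aux

theorem shift_map_conjugation (α : ℝ) (hα : 1 < α) (T : ℝ → ℝ)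
    (hT : ∀ e : ℕ, 1 ≤ e →
      ∀ x ∈ Set.Ioc (α ^ (-(e : ℤ))) (α ^ (-(e : ℤ) + 1)),
        T x = (α ^ (e : ℤ) * x - 1) / (α - 1)) :
    ∀ d : ℕ → ℕ, (∀ i, 1 ≤ d i) →
      T (alphaExpansion α d) = alphaExpansion α (fun i => d (i + 1)) ∧
      ∀ j e : ℕ, 1 ≤ e →
        (d j = e ↔
          T^[j] (alphaExpansion α d) ∈ Set.Ioc (α ^ (-(e : ℤ))) (α ^ (-(e : ℤ) + 1))) := by
  intro d hd
  refine ⟨aE_step hα T hT d hd, ?_⟩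
  intro j e he
  rw [aE_iter hα T hT j d hd]
  have hd' : ∀ i, 1 ≤ (fun i => d (i + j)) i := fun i => hd (i + j)
  have hmem := aE_mem hα (fun i => d (i + j)) hd'
  simp only [zero_add] at hmem
  constructor
  · intro h; rwa [← h]
  · intro h
    by_contra hne
    have hne' : d j ≠ e := hne
    rcases lt_or_gt_of_ne hne' with hlt | hgt
    ·
      -- x ≤ α^{-(d j)+1} ≤ α^{-e}?? need -(d j)+1 ≤ -e i.e. e+1 ≤ d j. wrong; with d j < e:
      -- x > α^{-e}?? we have h.1 : α^{-e} < x; hmem.2 : x ≤ α^{-(d j)+1}. Need α^{-(d j)+1} ≤ α^{-e}: -(d j)+1 ≤ -e ↔ e ≤ d j - 1. That's d j > e case.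
      have hle : α ^ (-(e : ℤ) + 1) ≤ α ^ (-(d j : ℤ)) :=
        zpow_le_zpow_right₀ hα.le (by omega)
      exact absurd (hmem.1.trans_le (h.2.trans hle)) (lt_irrefl _)
    · have hle : α ^ (-(d j : ℤ) + 1) ≤ α ^ (-(e : ℤ)) := by
        apply zpow_le_zpow_right₀ hα.le
        omega
      exact absurd (h.1.trans_le (hmem.2.trans hle)) (lt_irrefl _)
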